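/- Let n and d' be positive integers with 1 ≤ d' < n/2, and let λ be a real number with 2/3 < λ < 1 such that λd' is a positive integer. Set δ = d'/n. Then ∑_{w=λd'}^{d'} C(n,w) · ∑_{i=1}^{d'} ∑_{j=⌈(w+i−d')/2⌉⁺}^{min{w,i}} C(w,j)·C(n−w,i−j) ≤ (nλδ + 1) · 2^{n·( H₂(δ) + λδ + (1−λδ)·H₂( (δ − λδ/2)/(1−λδ) ) )}. -/

import Mathlib

open Finset

/-- `⌈(w+i-d')/2⌉⁺`: the smallest nonnegative integer `m` with `m ≥ (w+i-d')/2`. -/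
def ceilPos (w i d' : ℕ) : ℕ := (((w : ℤ) + i - d' + 1) / 2).toNat

/-- The binary entropy function. -/
noncomputable def binH (x : ℝ) : ℝ := -x * Real.logb 2 x - (1 - x) * Real.logb 2 (1 - x)

lemma two_rpow_neg_binH {N : ℕ} {x : ℝ} (hx0 : 0 < x) (hx1 : x < 1) :
    (2:ℝ) ^ (-((N:ℝ) * binH x)) = x ^ ((N:ℝ) * x) * (1-x) ^ ((N:ℝ) * (1-x)) := by
  have hq0 : (0:ℝ) < 1 - x := by linarith
  rw [Real.rpow_def_of_pos (by norm_num : (0:ℝ) < 2),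
      Real.rpow_def_of_pos hx0, Real.rpow_def_of_pos hq0, ← Real.exp_add]
  congr 1
  unfold binH
  rw [Real.logb, Real.logb]
  have h2 : Real.log 2 ≠ 0 := (Real.log_pos (by norm_num)).ne'
  field_simp
  ring

lemma chernoff (N m : ℕ) (x : ℝ) (hx0 : 0 < x) (hx2 : x ≤ 1/2) (hmN : m ≤ N)
    (hmx : (m:ℝ) ≤ N * x) :
    ∑ k ∈ Finset.range (m+1), (N.choose k : ℝ) ≤ 2 ^ ((N:ℝ) * binH x) := by
  have hq0 : (0:ℝ) < 1 - x := by linarith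
  have hxq : x ≤ 1 - x := by linarith
  have key : ∀ k ∈ Finset.range (m+1),
      (2:ℝ) ^ (-((N:ℝ) * binH x)) ≤ x ^ k * (1-x) ^ (N - k) := by
    intro k hk
    rw [Finset.mem_range, Nat.lt_succ_iff] at hk
    rw [two_rpow_neg_binH hx0 (by linarith)]
    have hkN : k ≤ N := hk.trans hmN
    have e1 : x ^ k * (1-x) ^ (N - k) = (x / (1-x)) ^ ((k:ℝ)) * (1-x) ^ ((N:ℝ)) := by
      rw [Real.rpow_natCast, Real.rpow_natCast, div_pow, pow_sub₀ _ hq0.ne' hkN]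
      field_simp
    have e2 : x ^ ((N:ℝ)*x) * (1-x) ^ ((N:ℝ)*(1-x)) = (x / (1-x)) ^ ((N:ℝ)*x) * (1-x) ^ ((N:ℝ)) := by
      rw [Real.div_rpow hx0.le hq0.le, mul_one_sub, Real.rpow_sub hq0]
      field_simp
    rw [e1, e2]
    have hb0 : 0 < x / (1-x) := div_pos hx0 hq0
    have hb1 : x / (1-x) ≤ 1 := (div_le_one hq0).2 hxq
    have : (x / (1-x)) ^ ((N:ℝ)*x) ≤ (x / (1-x)) ^ ((k:ℝ)) :=
      Real.rpow_le_rpow_of_exponent_ge hb0 hb1 (le_trans (Nat.cast_le.2 hk) hmx)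
    exact mul_le_mul_of_nonneg_right this (Real.rpow_nonneg hq0.le _)
  have hsum1 : ∑ k ∈ Finset.range (m+1), (N.choose k : ℝ) * (x ^ k * (1-x) ^ (N-k)) ≤ 1 := by
    have := add_pow x (1-x) N
    have hone : ∑ k ∈ Finset.range (N+1), x ^ k * (1-x) ^ (N-k) * (N.choose k : ℝ) = 1 := by
      rw [← this]; norm_num
    calc ∑ k ∈ Finset.range (m+1), (N.choose k : ℝ) * (x ^ k * (1-x) ^ (N-k))
        = ∑ k ∈ Finset.range (m+1), x ^ k * (1-x) ^ (N-k) * (N.choose k : ℝ) := by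
          apply Finset.sum_congr rfl; intros; ring
      _ ≤ ∑ k ∈ Finset.range (N+1), x ^ k * (1-x) ^ (N-k) * (N.choose k : ℝ) := by
          apply Finset.sum_le_sum_of_subset_of_nonneg
          · exact Finset.range_subset_range.2 (by omega)
          · intro k _ _
            positivity
      _ = 1 := hone
  have h2pos : (0:ℝ) < 2 ^ ((N:ℝ) * binH x) := Real.rpow_pos_of_pos (by norm_num) _
  rw [← mul_le_mul_iff_left₀ (Real.rpow_pos_of_pos (by norm_num : (0:ℝ)<2) (-((N:ℝ)*binH x)))]
  calc (∑ k ∈ Finset.range (m+1), (N.choose k : ℝ)) * 2 ^ (-((N:ℝ)*binH x))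
      = ∑ k ∈ Finset.range (m+1), (N.choose k : ℝ) * 2 ^ (-((N:ℝ)*binH x)) := by
        rw [Finset.sum_mul]
    _ ≤ ∑ k ∈ Finset.range (m+1), (N.choose k : ℝ) * (x ^ k * (1-x) ^ (N-k)) := by
        apply Finset.sum_le_sum
        intro k hk
        exact mul_le_mul_of_nonneg_left (key k hk) (Nat.cast_nonneg _)
    _ ≤ 1 := hsum1
    _ = 2 ^ ((N:ℝ)*binH x) * 2 ^ (-((N:ℝ)*binH x)) := by
        rw [← Real.rpow_add (by norm_num : (0:ℝ)<2)]; simp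

lemma binH_split {a b : ℝ} (ha : 0 < a) (hb : 0 < b) :
    (a+b) * binH (a/(a+b)) * Real.log 2
      = (a+b)*Real.log (a+b) - a*Real.log a - b*Real.log b := by
  have hs : 0 < a + b := by linarith
  have h1 : 1 - a/(a+b) = b/(a+b) := by field_simp; ring
  have h2 : Real.log 2 ≠ 0 := (Real.log_pos (by norm_num)).ne'
  unfold binH
  rw [h1, Real.logb, Real.logb, Real.log_div ha.ne' hs.ne', Real.log_div hb.ne' hs.ne']
  field_simp
  ring

lemma hasDerivAt_affine_log (c r x : ℝ) (h : c - r * x ≠ 0) :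
    HasDerivAt (fun y => (c - r * y) * Real.log (c - r * y))
      (-r * (Real.log (c - r*x) + 1)) x := by
  have hu : HasDerivAt (fun y : ℝ => c - r * y) (-r) x := by
    simpa using ((hasDerivAt_id x).const_mul r).const_sub c
  have := hu.mul (hu.log h)
  refine this.congr_deriv ?_
  field_simp
  ring

lemma exponent_anti (n d' : ℕ) (hd : 1 ≤ d') (hdn : 2*d' < n) (w0 w : ℕ)
    (h0 : w0 ≤ w) (h1 : w ≤ d') :
    (w:ℝ) + ((n:ℝ)-w) * binH (((d':ℝ)-w/2)/((n:ℝ)-w))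
      ≤ (w0:ℝ) + ((n:ℝ)-w0) * binH (((d':ℝ)-w0/2)/((n:ℝ)-w0)) := by
  have hdn' : (2:ℝ) * d' < n := by exact_mod_cast hdn
  have hd' : (1:ℝ) ≤ d' := by exact_mod_cast hd
  set G : ℝ → ℝ := fun x => x * Real.log 2 + ((n:ℝ)-x)*Real.log ((n:ℝ)-x)
    - ((d':ℝ)-x/2)*Real.log ((d':ℝ)-x/2) - ((n:ℝ)-(d':ℝ)-x/2)*Real.log ((n:ℝ)-(d':ℝ)-x/2)
    with hGdef
  -- positivity bounds on Icc 0 d'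
  have hpos : ∀ x ∈ Set.Icc (0:ℝ) (d':ℝ),
      0 < (d':ℝ) - x/2 ∧ 0 < (n:ℝ) - (d':ℝ) - x/2 ∧ 0 < (n:ℝ) - x := by
    intro x hx
    obtain ⟨hx0, hx1⟩ := hx
    refine ⟨by linarith, by linarith, by linarith⟩
  -- derivative
  have hderiv : ∀ x ∈ Set.Icc (0:ℝ) (d':ℝ),
      HasDerivAt G (Real.log 2 - Real.log ((n:ℝ)-x)
        + (1/2) * Real.log ((d':ℝ)-x/2) + (1/2) * Real.log ((n:ℝ)-(d':ℝ)-x/2)) x := by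
    intro x hx
    obtain ⟨ha, hb, hN⟩ := hpos x hx
    have hN' : HasDerivAt (fun y : ℝ => ((n:ℝ) - y) * Real.log ((n:ℝ) - y))
        (-1 * (Real.log ((n:ℝ) - x) + 1)) x := by
      have h := hasDerivAt_affine_log (n:ℝ) 1 x (by simpa using hN.ne')
      convert h using 2 with y <;> ring_nf
    have ha' : HasDerivAt (fun y : ℝ => ((d':ℝ) - y/2) * Real.log ((d':ℝ) - y/2))
        (-(1/2) * (Real.log ((d':ℝ) - x/2) + 1)) x := by
      have h := hasDerivAt_affine_log (d':ℝ) (1/2) x (by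
        rw [show (d':ℝ) - 1/2*x = (d':ℝ) - x/2 by ring]; exact ha.ne')
      convert h using 2 with y <;> ring_nf
    have hb' : HasDerivAt (fun y : ℝ => ((n:ℝ)-(d':ℝ) - y/2) * Real.log ((n:ℝ)-(d':ℝ) - y/2))
        (-(1/2) * (Real.log ((n:ℝ)-(d':ℝ) - x/2) + 1)) x := by
      have h := hasDerivAt_affine_log ((n:ℝ)-(d':ℝ)) (1/2) x (by
        rw [show (n:ℝ)-(d':ℝ) - 1/2*x = (n:ℝ)-(d':ℝ) - x/2 by ring]; exact hb.ne')
      convert h using 2 with y <;> ring_nf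
    have hlin : HasDerivAt (fun y : ℝ => y * Real.log 2) (Real.log 2) x := by
      simpa using (hasDerivAt_id x).mul_const (Real.log 2)
    have := ((hlin.add hN').sub ha').sub hb'
    refine this.congr_deriv ?_
    ring
  have hanti : AntitoneOn G (Set.Icc (0:ℝ) (d':ℝ)) := by
    apply antitoneOn_of_deriv_nonpos (convex_Icc _ _)
    · exact fun x hx => (hderiv x hx).continuousAt.continuousWithinAt
    · intro x hx
      rw [interior_Icc] at hx
      exact ((hderiv x (Set.mem_Icc_of_Ioo hx)).differentiableAt).differentiableWithinAt
    · intro x hx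
      rw [interior_Icc] at hx
      have hx' := Set.mem_Icc_of_Ioo hx
      rw [(hderiv x hx').deriv]
      obtain ⟨ha, hb, hN⟩ := hpos x hx'
      set a := (d':ℝ) - x/2
      set b := (n:ℝ) - (d':ℝ) - x/2
      have hab : (n:ℝ) - x = a + b := by simp [a, b]; ring
      have key : Real.log (4*(a*b)) ≤ Real.log ((a+b)*(a+b)) := by
        apply Real.log_le_log (by positivity)
        nlinarith [sq_nonneg (a-b)]
      rw [Real.log_mul (by norm_num) (by positivity), Real.log_mul ha.ne' hb.ne',
        Real.log_mul (by positivity) (by positivity),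
        show (4:ℝ) = 2^2 by norm_num, Real.log_pow] at key
      rw [hab]
      push_cast at key ⊢
      linarith
  -- transfer
  have hlog2 : (0:ℝ) < Real.log 2 := Real.log_pos (by norm_num)
  have hmem : ∀ u : ℕ, u ≤ d' → (u:ℝ) ∈ Set.Icc (0:ℝ) (d':ℝ) := by
    intro u hu
    exact ⟨Nat.cast_nonneg _, by exact_mod_cast hu⟩
  have hGle : G w ≤ G w0 := hanti (hmem w0 (h0.trans h1)) (hmem w h1) (by exact_mod_cast h0)
  have hrepr : ∀ u : ℕ, u ≤ d' →
      ((u:ℝ) + ((n:ℝ)-u) * binH (((d':ℝ)-u/2)/((n:ℝ)-u))) * Real.log 2 = G u := by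
    intro u hu
    obtain ⟨ha, hb, hN⟩ := hpos u (hmem u hu)
    have hab : (n:ℝ) - u = ((d':ℝ)-u/2) + ((n:ℝ)-(d':ℝ)-u/2) := by ring
    have := binH_split ha hb
    rw [hGdef]
    simp only []
    rw [add_mul, hab, this]
    ring
  have hw := hrepr w h1
  have h2 := hrepr w0 (h0.trans h1)
  exact le_of_mul_le_mul_right (by rw [hw, h2]; exact hGle) hlog2

lemma inner_bound (n d' w : ℕ) (hw : w ≤ d') :
    (∑ i ∈ Finset.Icc 1 d', ∑ j ∈ Finset.Icc (ceilPos w i d') (min w i),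
        (w.choose j : ℝ) * ((n - w).choose (i - j) : ℝ))
    ≤ 2^w * ∑ k ∈ Finset.range (d' - (w+1)/2 + 1), ((n-w).choose k : ℝ) := by
  classical
  set m := d' - (w+1)/2 with hm
  set A : Finset (Σ _ : ℕ, ℕ) := (Finset.Icc 1 d').sigma
    (fun i => Finset.Icc (ceilPos w i d') (min w i)) with hA
  set e : (Σ _ : ℕ, ℕ) → ℕ × ℕ := fun p => (p.2, p.1 - p.2) with he
  set F : ℕ × ℕ → ℝ := fun q => (w.choose q.1 : ℝ) * ((n - w).choose q.2 : ℝ) with hF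
  have hmemA : ∀ p ∈ A, 1 ≤ p.1 ∧ p.1 ≤ d' ∧ ceilPos w p.1 d' ≤ p.2 ∧ p.2 ≤ w ∧ p.2 ≤ p.1 := by
    intro p hp
    rw [hA, Finset.mem_sigma, Finset.mem_Icc, Finset.mem_Icc] at hp
    omega
  have hinj : ∀ p ∈ A, ∀ p' ∈ A, e p = e p' → p = p' := by
    intro p hp p' hp' hee
    obtain ⟨_, _, _, _, h5⟩ := hmemA p hp
    obtain ⟨_, _, _, _, h5'⟩ := hmemA p' hp'
    rw [he, Prod.mk.injEq] at hee
    obtain ⟨h1, h2⟩ := hee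
    have : p.1 = p'.1 := by omega
    exact Sigma.ext this (by exact heq_of_eq h1)
  calc (∑ i ∈ Finset.Icc 1 d', ∑ j ∈ Finset.Icc (ceilPos w i d') (min w i),
        (w.choose j : ℝ) * ((n - w).choose (i - j) : ℝ))
      = ∑ p ∈ A, F (e p) := Finset.sum_sigma' _ _ _
    _ = ∑ q ∈ A.image e, F q := (Finset.sum_image hinj).symm
    _ ≤ ∑ q ∈ Finset.range (w+1) ×ˢ Finset.range (m+1), F q := by
        apply Finset.sum_le_sum_of_subset_of_nonneg
        · intro q hq
          rw [Finset.mem_image] at hq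
          obtain ⟨p, hp, rfl⟩ := hq
          obtain ⟨h1, h2, h3, h4, h5⟩ := hmemA p hp
          rw [Finset.mem_product, Finset.mem_range, Finset.mem_range]
          unfold ceilPos at h3
          rw [Int.toNat_le] at h3
          refine ⟨?_, ?_⟩ <;> · simp only [he, hm]; omega
        · intro q _ _
          positivity
    _ = 2^w * ∑ k ∈ Finset.range (m+1), ((n-w).choose k : ℝ) := by
        rw [Finset.sum_product]
        simp only [hF]
        rw [← Finset.sum_mul_sum]
        congr 1
        rw [← Nat.cast_sum, Nat.sum_range_choose]
        push_cast
        ring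

theorem statement18 (n d' : ℕ) (hd : 1 ≤ d') (hdn : 2 * d' < n)
    (lam : ℝ) (hlam0 : 2 / 3 < lam) (hlam1 : lam < 1)
    (w0 : ℕ) (hw0 : (w0 : ℝ) = lam * (d' : ℝ)) (hw01 : 1 ≤ w0) :
    (∑ w ∈ Finset.Icc w0 d', (n.choose w : ℝ) *
      ∑ i ∈ Finset.Icc 1 d', ∑ j ∈ Finset.Icc (ceilPos w i d') (min w i),
        (w.choose j : ℝ) * ((n - w).choose (i - j) : ℝ))
    ≤ ((n : ℝ) * lam * ((d' : ℝ) / n) + 1) *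
      (2 : ℝ) ^ ((n : ℝ) * (binH ((d' : ℝ) / n) + lam * ((d' : ℝ) / n) +
        (1 - lam * ((d' : ℝ) / n)) *
          binH ((((d' : ℝ) / n) - lam * ((d' : ℝ) / n) / 2) / (1 - lam * ((d' : ℝ) / n))))) := by
  have hn0 : 0 < n := by omega
  have hn0' : (0:ℝ) < n := by exact_mod_cast hn0
  have hd0' : (0:ℝ) < d' := by exact_mod_cast hd
  have hdn' : (2:ℝ) * d' < n := by exact_mod_cast hdn
  -- w0 < d'
  have hw0d : w0 ≤ d' := by
    have : (w0:ℝ) < d' := by rw [hw0]; nlinarith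
    exact_mod_cast this.le
  have hd2w0 : d' ≤ 2 * w0 := by
    have : (d':ℝ) < 2 * w0 := by rw [hw0]; nlinarith
    have := this.le
    exact_mod_cast Nat.le_of_lt_succ (by exact_mod_cast (by nlinarith : (d':ℝ) < 2*w0 + 1))
  set δ : ℝ := (d':ℝ)/n with hδ
  have hδ0 : 0 < δ := div_pos hd0' hn0'
  have hδhalf : δ ≤ 1/2 := by rw [hδ, div_le_div_iff₀ hn0' (by norm_num)]; linarith
  -- rewrite RHS
  have hfac : (n:ℝ) * lam * ((d':ℝ)/n) = (w0:ℝ) := by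
    rw [hw0]; field_simp
  have hlamδ : lam * δ = (w0:ℝ)/n := by
    rw [hw0, hδ]; field_simp
  have hnw0 : (0:ℝ) < (n:ℝ) - w0 := by
    have : (w0:ℝ) ≤ d' := by exact_mod_cast hw0d
    linarith
  have harg : (δ - lam * δ / 2) / (1 - lam * δ) = ((d':ℝ) - w0/2) / ((n:ℝ) - w0) := by
    rw [hlamδ, hδ]
    rw [div_eq_div_iff]
    · field_simp
    · have : 1 - (w0:ℝ)/n = ((n:ℝ) - w0)/n := by field_simp
      rw [this]; positivity
    · exact hnw0.ne'
  have hexp : (n:ℝ) * (binH δ + lam * δ + (1 - lam * δ) * binH ((δ - lam*δ/2)/(1 - lam*δ)))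
      = (n:ℝ) * binH δ + ((w0:ℝ) + ((n:ℝ) - w0) * binH (((d':ℝ) - w0/2)/((n:ℝ) - w0))) := by
    rw [harg, hlamδ]
    field_simp
    ring
  rw [hfac, hexp]
  -- the per-term bound
  set B : ℝ := (2:ℝ) ^ ((n:ℝ) * binH δ + ((w0:ℝ) + ((n:ℝ) - w0) * binH (((d':ℝ) - w0/2)/((n:ℝ) - w0)))) with hB
  have hterm : ∀ w ∈ Finset.Icc w0 d', (n.choose w : ℝ) *
      (∑ i ∈ Finset.Icc 1 d', ∑ j ∈ Finset.Icc (ceilPos w i d') (min w i),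
        (w.choose j : ℝ) * ((n - w).choose (i - j) : ℝ)) ≤ B := by
    intro w hwmem
    rw [Finset.mem_Icc] at hwmem
    obtain ⟨hww0, hwd⟩ := hwmem
    have hwd' : (w:ℝ) ≤ d' := by exact_mod_cast hwd
    have hwn : w ≤ n := by omega
    have hnw : (0:ℝ) < (n:ℝ) - w := by linarith
    -- bound on C(n,w)
    have hC : (n.choose w : ℝ) ≤ (2:ℝ) ^ ((n:ℝ) * binH δ) := by
      calc (n.choose w : ℝ) ≤ ∑ k ∈ Finset.range (w+1), (n.choose k : ℝ) := by
            apply Finset.single_le_sum (f := fun k => (n.choose k : ℝ))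
              (fun k _ => Nat.cast_nonneg _)
            exact Finset.self_mem_range_succ w
        _ ≤ (2:ℝ) ^ ((n:ℝ) * binH δ) := by
            apply chernoff n w δ hδ0 hδhalf hwn
            rw [hδ]; field_simp; exact_mod_cast hwd
    -- bound on the inner double sum
    set x : ℝ := ((d':ℝ) - w/2)/((n:ℝ) - w) with hx
    have hx0 : 0 < x := by
      apply div_pos _ hnw
      linarith
    have hx2 : x ≤ 1/2 := by
      rw [hx, div_le_div_iff₀ hnw (by norm_num)]
      linarith
    have hcast : ((n - w : ℕ) : ℝ) = (n:ℝ) - w := by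
      push_cast [hwn]; ring
    have hSig : ∑ k ∈ Finset.range (d' - (w+1)/2 + 1), ((n-w).choose k : ℝ)
        ≤ (2:ℝ) ^ (((n:ℝ) - w) * binH x) := by
      have := chernoff (n - w) (d' - (w+1)/2) x hx0 hx2 (by omega)
        (by
          rw [hcast, hx, mul_comm, div_mul_cancel₀ _ hnw.ne']
          have h2 : 2 * (d' - (w+1)/2) ≤ 2*d' - w := by omega
          have h3 : ((d' - (w+1)/2 : ℕ) : ℝ) ≤ ((2*d' - w : ℕ):ℝ)/2 := by
            rw [le_div_iff₀ (by norm_num)]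
            calc ((d' - (w+1)/2 : ℕ):ℝ) * 2 = ((2*(d' - (w+1)/2) : ℕ):ℝ) := by push_cast; ring
              _ ≤ ((2*d' - w:ℕ):ℝ) := by exact_mod_cast h2
          refine h3.trans ?_
          have h4 : ((2*d' - w : ℕ):ℝ) = 2*(d':ℝ) - w := by
            push_cast [(by omega : w ≤ 2*d')]; ring
          rw [h4]; linarith)
      rwa [hcast] at this
    have hS := inner_bound n d' w hwd
    have hS2 : (∑ i ∈ Finset.Icc 1 d', ∑ j ∈ Finset.Icc (ceilPos w i d') (min w i),
        (w.choose j : ℝ) * ((n - w).choose (i - j) : ℝ))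
        ≤ (2:ℝ)^((w:ℝ)) * (2:ℝ) ^ (((n:ℝ) - w) * binH x) := by
      refine hS.trans ?_
      rw [Real.rpow_natCast]
      exact mul_le_mul_of_nonneg_left hSig (by positivity)
    calc (n.choose w : ℝ) *
        (∑ i ∈ Finset.Icc 1 d', ∑ j ∈ Finset.Icc (ceilPos w i d') (min w i),
          (w.choose j : ℝ) * ((n - w).choose (i - j) : ℝ))
        ≤ (2:ℝ) ^ ((n:ℝ) * binH δ) * ((2:ℝ)^((w:ℝ)) * (2:ℝ) ^ (((n:ℝ) - w) * binH x)) := by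
          apply mul_le_mul hC hS2 _ (by positivity)
          · apply Finset.sum_nonneg
            intro i _
            apply Finset.sum_nonneg
            intro j _
            positivity
      _ = (2:ℝ) ^ ((n:ℝ) * binH δ + ((w:ℝ) + ((n:ℝ) - w) * binH x)) := by
          rw [Real.rpow_add (by norm_num), Real.rpow_add (by norm_num)]
      _ ≤ B := by
          rw [hB]
          apply Real.rpow_le_rpow_of_exponent_le (by norm_num)
          have := exponent_anti n d' hd hdn w0 w hww0 hwd
          rw [hx]
          linarith
  calc (∑ w ∈ Finset.Icc w0 d', (n.choose w : ℝ) *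
      ∑ i ∈ Finset.Icc 1 d', ∑ j ∈ Finset.Icc (ceilPos w i d') (min w i),
        (w.choose j : ℝ) * ((n - w).choose (i - j) : ℝ))
      ≤ (Finset.Icc w0 d').card • B := Finset.sum_le_card_nsmul _ _ _ hterm
    _ ≤ ((w0:ℝ) + 1) * B := by
        rw [nsmul_eq_mul, Nat.card_Icc]
        apply mul_le_mul_of_nonneg_right _ (by positivity)
        have : d' + 1 - w0 ≤ w0 + 1 := by omega
        calc ((d' + 1 - w0 : ℕ):ℝ) ≤ ((w0 + 1 : ℕ):ℝ) := by exact_mod_cast this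
          _ = (w0:ℝ) + 1 := by push_cast; ring
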